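/- Let (a_k)_{k≥1} be Wiener-class sequences and (E_k)_{k≥1} bounded semi-infinite real matrices with the decay property, and suppose the matrices A_k := T(a_k) + E_k form a Cauchy sequence with respect to the infinity norm ‖·‖_∞. Then there exist a Wiener-class sequence a and a bounded semi-infinite matrix E with the decay property such that lim_{k→∞} ‖A_k − (T(a)+E)‖_∞ = 0; moreover lim_{k→∞} ‖a_k − a‖_W = 0 and lim_{k→∞} ‖E_k − E‖_∞ = 0. (The class QT_∞^d is complete in the infinity norm.) -/

import Mathlib

open Filter Topology

/-- Every row of `A` is absolutely summable. -/
def RowsSummable (A : ℕ → ℕ → ℝ) : Prop := ∀ i, Summable fun j => |A i j|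

/-- The infinity norm of a semi-infinite matrix: the supremum of the row sums. -/
noncomputable def normInf (A : ℕ → ℕ → ℝ) : ℝ := ⨆ i, ∑' j, |A i j|

/-- `A` is bounded: all row sums are finite and their supremum is finite. -/
def MatBounded (A : ℕ → ℕ → ℝ) : Prop :=
  RowsSummable A ∧ BddAbove (Set.range fun i => ∑' j, |A i j|)

/-- `A` has the decay property: all row sums are finite and tend to zero. -/
def HasDecay (A : ℕ → ℕ → ℝ) : Prop :=
  RowsSummable A ∧ Tendsto (fun i => ∑' j, |A i j|) atTop (𝓝 0)

/-- The semi-infinite Toeplitz matrix associated with a two-sided sequence: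
`T(a)_{ij} = a_{j−i}`. -/
noncomputable def Toep (a : ℤ → ℝ) : ℕ → ℕ → ℝ := fun i j => a ((j : ℤ) - (i : ℤ))

/-- Convolution of two-sided sequences. -/
noncomputable def zconv (a b : ℤ → ℝ) : ℤ → ℝ := fun n => ∑' k : ℤ, a k * b (n - k)

/- Auxiliary lemmas -/

lemma aux_summable_abs_add {ι : Type*} {u v : ι → ℝ}
    (hu : Summable fun x => |u x|) (hv : Summable fun x => |v x|) :
    Summable fun x => |u x + v x| :=
  (hu.add hv).of_nonneg_of_le (fun _ => abs_nonneg _) (fun x => abs_add_le _ _)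

lemma aux_summable_abs_sub {ι : Type*} {u v : ι → ℝ}
    (hu : Summable fun x => |u x|) (hv : Summable fun x => |v x|) :
    Summable fun x => |u x - v x| :=
  (hu.add hv).of_nonneg_of_le (fun _ => abs_nonneg _) (fun x => abs_sub _ _)

lemma aux_tsum_abs_add_le {ι : Type*} {u v : ι → ℝ}
    (hu : Summable fun x => |u x|) (hv : Summable fun x => |v x|) :
    ∑' x, |u x + v x| ≤ (∑' x, |u x|) + ∑' x, |v x| := by
  calc ∑' x, |u x + v x| ≤ ∑' x, (|u x| + |v x|) :=
        Summable.tsum_le_tsum (fun x => abs_add_le _ _) (aux_summable_abs_add hu hv) (hu.add hv)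
    _ = (∑' x, |u x|) + ∑' x, |v x| := Summable.tsum_add hu hv

lemma aux_tsum_abs_sub_le {ι : Type*} {u v : ι → ℝ}
    (hu : Summable fun x => |u x|) (hv : Summable fun x => |v x|) :
    ∑' x, |u x - v x| ≤ (∑' x, |u x|) + ∑' x, |v x| := by
  calc ∑' x, |u x - v x| ≤ ∑' x, (|u x| + |v x|) :=
        Summable.tsum_le_tsum (fun x => abs_sub _ _) (aux_summable_abs_sub hu hv) (hu.add hv)
    _ = (∑' x, |u x|) + ∑' x, |v x| := Summable.tsum_add hu hv

/-- reverse triangle: `∑|u| ≤ ∑|u+v| + ∑|v|` -/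
lemma aux_tsum_abs_le_add {ι : Type*} {u v : ι → ℝ}
    (hu : Summable fun x => |u x|) (hv : Summable fun x => |v x|) :
    ∑' x, |u x| ≤ (∑' x, |u x + v x|) + ∑' x, |v x| := by
  have h1 : ∀ x, |u x| ≤ |u x + v x| + |v x| := by
    intro x
    have h := abs_sub (u x + v x) (v x)
    rwa [add_sub_cancel_right] at h
  calc ∑' x, |u x| ≤ ∑' x, (|u x + v x| + |v x|) :=
        Summable.tsum_le_tsum h1 hu ((aux_summable_abs_add hu hv).add hv)
    _ = _ := Summable.tsum_add (aux_summable_abs_add hu hv) hv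

/-- If `u` is close to `v` in ℓ¹, then `u` is summable with controlled norm. -/
lemma aux_close {ι : Type*} {u v : ι → ℝ} (hv : Summable fun x => |v x|)
    (hvu : Summable fun x => |v x - u x|) :
    (Summable fun x => |u x|) ∧
      (∑' x, |u x|) ≤ (∑' x, |v x|) + ∑' x, |v x - u x| := by
  have hb : ∀ x, |u x| ≤ |v x| + |v x - u x| := by
    intro x
    have h := abs_sub (v x) (v x - u x)
    rwa [sub_sub_cancel] at h
  have hs := (hv.add hvu).of_nonneg_of_le (fun _ => abs_nonneg _) hb
  exact ⟨hs, le_trans (Summable.tsum_le_tsum hb hs (hv.add hvu)) (le_of_eq (Summable.tsum_add hv hvu))⟩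

lemma toep_inj (i : ℕ) : Function.Injective (fun j : ℕ => (j : ℤ) - (i : ℤ)) := by
  intro x y h; simpa using h

lemma toep_row_summable {b : ℤ → ℝ} (hb : Summable fun n => |b n|) (i : ℕ) :
    Summable fun j : ℕ => |b ((j : ℤ) - (i : ℤ))| :=
  hb.comp_injective (toep_inj i)

lemma toep_row_le {b : ℤ → ℝ} (hb : Summable fun n => |b n|) (i : ℕ) :
    (∑' j : ℕ, |b ((j : ℤ) - (i : ℤ))|) ≤ ∑' n : ℤ, |b n| :=
  Summable.tsum_le_tsum_of_inj _ (toep_inj i) (fun _ _ => abs_nonneg _) (fun _ => le_rfl)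
    (toep_row_summable hb i) hb

lemma toep_row_ge {b : ℤ → ℝ} (hb : Summable fun n => |b n|) (s : Finset ℤ) (i : ℕ)
    (hi : ∀ n ∈ s, -(i : ℤ) ≤ n) :
    (∑ n ∈ s, |b n|) ≤ ∑' j : ℕ, |b ((j : ℤ) - (i : ℤ))| := by
  have key : ∑ n ∈ s, |b n| = ∑ j ∈ s.image (fun n => (n + (i : ℤ)).toNat),
      |b ((j : ℤ) - (i : ℤ))| := by
    rw [Finset.sum_image]
    · refine (Finset.sum_congr rfl fun n hn => ?_).symm
      have hn' := hi n hn
      have h2 : ((n + (i : ℤ)).toNat : ℤ) - (i : ℤ) = n := by omega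
      rw [h2]
    · intro x hx y hy hxy
      have hx' := hi x hx; have hy' := hi y hy
      simp only at hxy
      omega
  rw [key]
  exact Summable.sum_le_tsum _ (fun _ _ => abs_nonneg _) (toep_row_summable hb i)

/-- Key lemma: the Wiener norm of `b` is at most the infinity norm of `T(b) + F`
when `F` has decaying row sums. -/
lemma wiener_le_normInf {b : ℤ → ℝ} {F : ℕ → ℕ → ℝ} (hb : Summable fun n => |b n|)
    (hF : ∀ i, Summable fun j => |F i j|)
    (hFd : Tendsto (fun (i : ℕ) => ∑' (j : ℕ), |F i j|) atTop (𝓝 0))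
    (hbdd : BddAbove (Set.range fun (i : ℕ) => ∑' (j : ℕ), |b ((j : ℤ) - (i : ℤ)) + F i j|)) :
    (∑' n : ℤ, |b n|) ≤ ⨆ (i : ℕ), ∑' (j : ℕ), |b ((j : ℤ) - (i : ℤ)) + F i j| := by
  set S := ∑' n : ℤ, |b n| with hS
  set M := ⨆ (i : ℕ), ∑' (j : ℕ), |b ((j : ℤ) - (i : ℤ)) + F i j| with hM
  by_contra hcon
  push_neg at hcon
  set ε := (S - M) / 2 with hε
  have hεpos : 0 < ε := by simp only [hε]; linarith
  obtain ⟨s, hs⟩ : ∃ s : Finset ℤ, S - ε / 2 < ∑ n ∈ s, |b n| :=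
    (hb.hasSum.eventually (eventually_gt_nhds (show S - ε / 2 < S by linarith))).exists
  obtain ⟨I2, hI2⟩ : ∃ I2 : ℕ, ∀ i ≥ I2, ∑' (j : ℕ), |F i j| < ε / 2 := by
    obtain ⟨N, hN⟩ := (Metric.tendsto_atTop.1 hFd) (ε / 2) (by linarith)
    refine ⟨N, fun i hi => ?_⟩
    have := hN i hi
    rw [Real.dist_eq, sub_zero] at this
    exact lt_of_abs_lt this
  set I1 : ℕ := s.sup fun n => (-n).toNat with hI1
  set i : ℕ := max I1 I2 with hidef
  have hins : ∀ n ∈ s, -(i : ℤ) ≤ n := by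
    intro n hn
    have h1 : (-n).toNat ≤ I1 := Finset.le_sup (f := fun n => (-n).toNat) hn
    have h2 : I1 ≤ i := le_max_left _ _
    omega
  have hrow1 : (∑ n ∈ s, |b n|) ≤ ∑' j : ℕ, |b ((j : ℤ) - (i : ℤ))| :=
    toep_row_ge hb s i hins
  have hrow2 : (∑' j : ℕ, |b ((j : ℤ) - (i : ℤ))|) ≤
      (∑' (j : ℕ), |b ((j : ℤ) - (i : ℤ)) + F i j|) + ∑' (j : ℕ), |F i j| :=
    aux_tsum_abs_le_add (toep_row_summable hb i) (hF i)
  have hrow3 : (∑' (j : ℕ), |b ((j : ℤ) - (i : ℤ)) + F i j|) ≤ M := le_ciSup hbdd i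
  have hrow4 : (∑' (j : ℕ), |F i j|) < ε / 2 := hI2 i (le_max_right _ _)
  have hfin : S - ε / 2 < M + ε / 2 := by
    calc S - ε / 2 < ∑ n ∈ s, |b n| := hs
      _ ≤ ∑' j : ℕ, |b ((j : ℤ) - (i : ℤ))| := hrow1
      _ ≤ (∑' (j : ℕ), |b ((j : ℤ) - (i : ℤ)) + F i j|) + ∑' (j : ℕ), |F i j| := hrow2
      _ < M + ε / 2 := by linarith
  simp only [hε] at hfin
  linarith

/-- ℓ¹ completeness with a quantitative convergence clause. -/
lemma l1_lim {ι : Type*} (f : ℕ → ι → ℝ) (hf : ∀ k, Summable fun x => |f k x|)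
    (hc : ∀ ε : ℝ, 0 < ε → ∃ N : ℕ, ∀ m ≥ N, ∀ n ≥ N, (∑' x, |f m x - f n x|) ≤ ε) :
    ∃ g : ι → ℝ, (Summable fun x => |g x|) ∧ (∀ k, Summable fun x => |f k x - g x|) ∧
      ∀ (ε : ℝ) (N : ℕ), (∀ m ≥ N, ∀ n ≥ N, (∑' x, |f m x - f n x|) ≤ ε) →
        ∀ m ≥ N, (∑' x, |f m x - g x|) ≤ ε := by
  have hd : ∀ m n, Summable fun x => |f m x - f n x| :=
    fun m n => aux_summable_abs_sub (hf m) (hf n)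
  have hpt : ∀ x, ∃ L : ℝ, Tendsto (fun k => f k x) atTop (𝓝 L) := by
    intro x
    have hcs : CauchySeq fun k => f k x := by
      rw [Metric.cauchySeq_iff]
      intro ε hε
      obtain ⟨N, hN⟩ := hc (ε / 2) (by linarith)
      refine ⟨N, fun m hm n hn => ?_⟩
      have h1 : |f m x - f n x| ≤ ∑' y, |f m y - f n y| :=
        Summable.le_tsum (hd m n) x (fun _ _ => abs_nonneg _)
      have h2 := hN m hm n hn
      rw [Real.dist_eq]
      linarith
    exact cauchySeq_tendsto_of_complete hcs
  choose g hg using hpt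
  have hquant : ∀ (ε : ℝ) (N : ℕ), (∀ m ≥ N, ∀ n ≥ N, (∑' x, |f m x - f n x|) ≤ ε) →
      ∀ m ≥ N, (∀ s : Finset ι, (∑ x ∈ s, |f m x - g x|) ≤ ε) := by
    intro ε N hN m hm s
    have ht : Tendsto (fun n => ∑ x ∈ s, |f m x - f n x|) atTop
        (𝓝 (∑ x ∈ s, |f m x - g x|)) :=
      tendsto_finset_sum _ fun x _ => ((hg x).const_sub (f m x)).abs
    refine le_of_tendsto ht (eventually_atTop.2 ⟨N, fun n hn => ?_⟩)
    exact le_trans (Summable.sum_le_tsum s (fun _ _ => abs_nonneg _) (hd m n)) (hN m hm n hn)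
  have hsum : ∀ (ε : ℝ) (N : ℕ), (∀ m ≥ N, ∀ n ≥ N, (∑' x, |f m x - f n x|) ≤ ε) →
      ∀ m ≥ N, Summable fun x => |f m x - g x| := by
    intro ε N hN m hm
    exact summable_of_sum_le (fun x => abs_nonneg _) (hquant ε N hN m hm)
  obtain ⟨N1, hN1⟩ := hc 1 one_pos
  have hs1 : Summable fun x => |f N1 x - g x| := hsum 1 N1 hN1 N1 le_rfl
  have hks : ∀ k, Summable fun x => |f k x - g x| := by
    intro k
    have hb : ∀ x, |f k x - g x| ≤ |f k x - f N1 x| + |f N1 x - g x| := by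
      intro x
      have h := abs_add_le (f k x - f N1 x) (f N1 x - g x)
      rwa [sub_add_sub_cancel] at h
    exact ((hd k N1).add hs1).of_nonneg_of_le (fun _ => abs_nonneg _) hb
  have hgsum : Summable fun x => |g x| := by
    have hb : ∀ x, |g x| ≤ |f N1 x| + |f N1 x - g x| := by
      intro x
      have h := abs_sub (f N1 x) (f N1 x - g x)
      rwa [sub_sub_cancel] at h
    exact ((hf N1).add hs1).of_nonneg_of_le (fun _ => abs_nonneg _) hb
  exact ⟨g, hgsum, hks, fun ε N hN m hm => Summable.tsum_le_of_sum_le (hks m) (hquant ε N hN m hm)⟩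

theorem stmt9 (a : ℕ → ℤ → ℝ) (ha : ∀ k, Summable fun n => |a k n|)
    (Ek : ℕ → ℕ → ℕ → ℝ) (hEk : ∀ k, MatBounded (Ek k)) (hEkd : ∀ k, HasDecay (Ek k))
    (hcauchy : ∀ ε : ℝ, 0 < ε → ∃ N : ℕ, ∀ m ≥ N, ∀ n ≥ N,
      normInf (fun i j => (Toep (a m) i j + Ek m i j) - (Toep (a n) i j + Ek n i j)) < ε) :
    ∃ (aL : ℤ → ℝ) (E : ℕ → ℕ → ℝ),
      Summable (fun n => |aL n|) ∧ MatBounded E ∧ HasDecay E ∧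
      Tendsto (fun k => normInf
        (fun i j => (Toep (a k) i j + Ek k i j) - (Toep aL i j + E i j))) atTop (𝓝 0) ∧
      Tendsto (fun k => ∑' n : ℤ, |a k n - aL n|) atTop (𝓝 0) ∧
      Tendsto (fun k => normInf (fun i j => Ek k i j - E i j)) atTop (𝓝 0) := by
  have hda : ∀ m n, Summable fun t : ℤ => |a m t - a n t| :=
    fun m n => aux_summable_abs_sub (ha m) (ha n)
  have hdE : ∀ m n (i : ℕ), Summable fun j => |Ek m i j - Ek n i j| :=
    fun m n i => aux_summable_abs_sub ((hEk m).1 i) ((hEk n).1 i)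
  have hsplit : ∀ m n (i j : ℕ),
      (Toep (a m) i j + Ek m i j) - (Toep (a n) i j + Ek n i j)
        = (a m ((j : ℤ) - (i : ℤ)) - a n ((j : ℤ) - (i : ℤ))) + (Ek m i j - Ek n i j) := by
    intro m n i j; simp only [Toep]; ring
  have hEbd : ∀ k (i : ℕ), (∑' (j : ℕ), |Ek k i j|) ≤ normInf (Ek k) := fun k i => le_ciSup (hEk k).2 i
  -- row sums of the difference matrix, in split form
  have hrowDle : ∀ m n (i : ℕ), (∑' (j : ℕ),
      |(a m ((j : ℤ) - (i : ℤ)) - a n ((j : ℤ) - (i : ℤ))) + (Ek m i j - Ek n i j)|)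
      ≤ (∑' t : ℤ, |a m t - a n t|) + (normInf (Ek m) + normInf (Ek n)) := by
    intro m n i
    have h1 := aux_tsum_abs_add_le (toep_row_summable (hda m n) i) (hdE m n i)
    have h2 := toep_row_le (hda m n) i
    have h4 := aux_tsum_abs_sub_le ((hEk m).1 i) ((hEk n).1 i)
    have h5 := hEbd m i
    have h6 := hEbd n i
    linarith
  have hbddD : ∀ m n, BddAbove (Set.range fun (i : ℕ) => ∑' (j : ℕ),
      |(a m ((j : ℤ) - (i : ℤ)) - a n ((j : ℤ) - (i : ℤ))) + (Ek m i j - Ek n i j)|) := by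
    intro m n
    refine ⟨(∑' t : ℤ, |a m t - a n t|) + (normInf (Ek m) + normInf (Ek n)), ?_⟩
    rintro x ⟨i, rfl⟩
    exact hrowDle m n i
  have hnormeq : ∀ m n, normInf (fun i j =>
      (Toep (a m) i j + Ek m i j) - (Toep (a n) i j + Ek n i j))
      = ⨆ (i : ℕ), ∑' (j : ℕ),
        |(a m ((j : ℤ) - (i : ℤ)) - a n ((j : ℤ) - (i : ℤ))) + (Ek m i j - Ek n i j)| := by
    intro m n
    simp only [normInf]
    exact iSup_congr fun i => tsum_congr fun j => by rw [hsplit]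
  -- Cauchy in the Wiener norm
  have hacauchy : ∀ ε : ℝ, 0 < ε → ∃ N : ℕ, ∀ m ≥ N, ∀ n ≥ N,
      (∑' t : ℤ, |a m t - a n t|) ≤ ε := by
    intro ε hε
    obtain ⟨N, hN⟩ := hcauchy ε hε
    refine ⟨N, fun m hm n hn => ?_⟩
    have hFd : Tendsto (fun (i : ℕ) => ∑' (j : ℕ), |Ek m i j - Ek n i j|) atTop (𝓝 0) := by
      have h0 : Tendsto (fun i => (∑' (j : ℕ), |Ek m i j|) + ∑' (j : ℕ), |Ek n i j|) atTop (𝓝 0) := by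
        simpa using ((hEkd m).2.add (hEkd n).2)
      exact squeeze_zero (fun i => tsum_nonneg fun j => abs_nonneg _)
        (fun i => aux_tsum_abs_sub_le ((hEk m).1 i) ((hEk n).1 i)) h0
    have key := wiener_le_normInf (hda m n) (hdE m n) hFd (hbddD m n)
    have hlt := hN m hm n hn
    rw [hnormeq m n] at hlt
    exact key.trans hlt.le
  -- normInf bound for split rows
  have hrowDnorm : ∀ m n (i : ℕ), (∑' (j : ℕ),
      |(a m ((j : ℤ) - (i : ℤ)) - a n ((j : ℤ) - (i : ℤ))) + (Ek m i j - Ek n i j)|)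
      ≤ normInf (fun i j => (Toep (a m) i j + Ek m i j) - (Toep (a n) i j + Ek n i j)) := by
    intro m n i
    rw [hnormeq m n]
    exact le_ciSup (hbddD m n) i
  -- Cauchy for the E part, uniformly over rows
  have hEcauchy : ∀ ε : ℝ, 0 < ε → ∃ N : ℕ, ∀ m ≥ N, ∀ n ≥ N, ∀ i : ℕ,
      (∑' (j : ℕ), |Ek m i j - Ek n i j|) ≤ ε := by
    intro ε hε
    obtain ⟨N1, hN1⟩ := hcauchy (ε / 2) (by linarith)
    obtain ⟨N2, hN2⟩ := hacauchy (ε / 2) (by linarith)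
    refine ⟨max N1 N2, fun m hm n hn i => ?_⟩
    have hm1 : m ≥ N1 := le_trans (le_max_left _ _) hm
    have hn1 : n ≥ N1 := le_trans (le_max_left _ _) hn
    have hm2 : m ≥ N2 := le_trans (le_max_right _ _) hm
    have hn2 : n ≥ N2 := le_trans (le_max_right _ _) hn
    -- |Ediff| ≤ |Ediff + toepdiff| + |toepdiff|
    have step1 : (∑' (j : ℕ), |Ek m i j - Ek n i j|) ≤
        (∑' (j : ℕ), |(Ek m i j - Ek n i j) + (a m ((j : ℤ) - (i : ℤ)) - a n ((j : ℤ) - (i : ℤ)))|)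
        + ∑' (j : ℕ), |a m ((j : ℤ) - (i : ℤ)) - a n ((j : ℤ) - (i : ℤ))| :=
      aux_tsum_abs_le_add (hdE m n i) (toep_row_summable (hda m n) i)
    have hcomm : (∑' (j : ℕ), |(Ek m i j - Ek n i j)
          + (a m ((j : ℤ) - (i : ℤ)) - a n ((j : ℤ) - (i : ℤ)))|)
        = ∑' (j : ℕ), |(a m ((j : ℤ) - (i : ℤ)) - a n ((j : ℤ) - (i : ℤ))) + (Ek m i j - Ek n i j)| :=
      tsum_congr fun j => by rw [add_comm]
    rw [hcomm] at step1
    have step2 := hrowDnorm m n i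
    have step3 := (hN1 m hm1 n hn1).le
    have step4 := toep_row_le (hda m n) i
    have step5 := hN2 m hm2 n hn2
    linarith
  -- the limit sequence aL
  obtain ⟨aL, haLsum, haks, haq⟩ := l1_lim a ha hacauchy
  -- the limit matrix E, row by row
  have hrowlim : ∀ i : ℕ, ∃ g : ℕ → ℝ, (Summable fun j => |g j|) ∧
      (∀ k, Summable fun j => |Ek k i j - g j|) ∧
      ∀ (ε : ℝ) (N : ℕ), (∀ m ≥ N, ∀ n ≥ N, (∑' (j : ℕ), |Ek m i j - Ek n i j|) ≤ ε) →
        ∀ m ≥ N, (∑' (j : ℕ), |Ek m i j - g j|) ≤ ε := by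
    intro i
    exact l1_lim (fun k j => Ek k i j) (fun k => (hEk k).1 i)
      (fun ε hε => (hEcauchy ε hε).imp fun N hN m hm n hn => hN m hm n hn i)
  choose E hE1 hE2 hE3 using hrowlim
  -- uniform convergence of rows
  have hEconv : ∀ ε : ℝ, 0 < ε → ∃ N : ℕ, ∀ m ≥ N, ∀ i : ℕ,
      (∑' (j : ℕ), |Ek m i j - E i j|) ≤ ε := by
    intro ε hε
    obtain ⟨N, hN⟩ := hEcauchy ε hε
    exact ⟨N, fun m hm i => hE3 i ε N (fun m' hm' n hn => hN m' hm' n hn i) m hm⟩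
  -- E is bounded
  obtain ⟨Nb, hNb⟩ := hEconv 1 one_pos
  have hErows : RowsSummable E := by
    intro i
    exact (aux_close ((hEk Nb).1 i) (hE2 i Nb)).1
  have hErowbd : ∀ i : ℕ, (∑' (j : ℕ), |E i j|) ≤ normInf (Ek Nb) + 1 := by
    intro i
    have h := (aux_close ((hEk Nb).1 i) (hE2 i Nb)).2
    have h2 := hEbd Nb i
    have h3 := hNb Nb le_rfl i
    linarith
  have hEMatB : MatBounded E := by
    refine ⟨hErows, ⟨normInf (Ek Nb) + 1, ?_⟩⟩
    rintro x ⟨i, rfl⟩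
    exact hErowbd i
  -- E has decay
  have hEdecay : HasDecay E := by
    refine ⟨hErows, ?_⟩
    rw [Metric.tendsto_atTop]
    intro ε hε
    obtain ⟨N, hN⟩ := hEconv (ε / 2) (by linarith)
    obtain ⟨I, hI⟩ := (Metric.tendsto_atTop.1 (hEkd N).2) (ε / 2) (by linarith)
    refine ⟨I, fun i hi => ?_⟩
    have h1 : (∑' (j : ℕ), |E i j|) ≤ (∑' (j : ℕ), |Ek N i j|) + ∑' (j : ℕ), |Ek N i j - E i j| :=
      (aux_close ((hEk N).1 i) (hE2 i N)).2
    have h2 := hN N le_rfl i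
    have h3 := hI i hi
    rw [Real.dist_eq, sub_zero] at h3
    have h5 : (∑' (j : ℕ), |Ek N i j|) < ε / 2 := lt_of_abs_lt h3
    rw [Real.dist_eq, sub_zero]
    have h6 : (0:ℝ) ≤ ∑' (j : ℕ), |E i j| := tsum_nonneg fun j => abs_nonneg _
    rw [abs_of_nonneg h6]
    linarith
  -- convergence of Ek to E in normInf
  have hEtend : Tendsto (fun k => normInf (fun i j => Ek k i j - E i j)) atTop (𝓝 0) := by
    rw [Metric.tendsto_atTop]
    intro ε hε
    obtain ⟨N, hN⟩ := hEconv (ε / 2) (by linarith)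
    refine ⟨N, fun k hk => ?_⟩
    have hle : normInf (fun i j => Ek k i j - E i j) ≤ ε / 2 := by
      simp only [normInf]
      exact ciSup_le fun i => hN k hk i
    have hge : (0:ℝ) ≤ normInf (fun i j => Ek k i j - E i j) := by
      simp only [normInf]
      exact Real.iSup_nonneg fun i => tsum_nonneg fun j => abs_nonneg _
    rw [Real.dist_eq, sub_zero, abs_of_nonneg hge]
    linarith
  -- convergence of a k to aL in Wiener norm
  have haT : Tendsto (fun k => ∑' t : ℤ, |a k t - aL t|) atTop (𝓝 0) := by
    rw [Metric.tendsto_atTop]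
    intro ε hε
    obtain ⟨N, hN⟩ := hacauchy (ε / 2) (by linarith)
    refine ⟨N, fun k hk => ?_⟩
    have h := haq (ε / 2) N hN k hk
    rw [Real.dist_eq, sub_zero,
      abs_of_nonneg (tsum_nonneg fun _ => abs_nonneg _)]
    linarith
  -- convergence of the full matrices
  have hmain : Tendsto (fun k => normInf
      (fun i j => (Toep (a k) i j + Ek k i j) - (Toep aL i j + E i j))) atTop (𝓝 0) := by
    rw [Metric.tendsto_atTop]
    intro ε hε
    obtain ⟨Na, hNa⟩ := hacauchy (ε / 3) (by linarith)
    obtain ⟨Ne, hNe⟩ := hEconv (ε / 3) (by linarith)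
    refine ⟨max Na Ne, fun k hk => ?_⟩
    have hka : k ≥ Na := le_trans (le_max_left _ _) hk
    have hke : k ≥ Ne := le_trans (le_max_right _ _) hk
    have haw : (∑' t : ℤ, |a k t - aL t|) ≤ ε / 3 := haq (ε / 3) Na hNa k hka
    have hrowle : ∀ i : ℕ, (∑' (j : ℕ), |(Toep (a k) i j + Ek k i j) - (Toep aL i j + E i j)|)
        ≤ 2 * (ε / 3) := by
      intro i
      have heqr : (∑' (j : ℕ), |(Toep (a k) i j + Ek k i j) - (Toep aL i j + E i j)|)
          = ∑' (j : ℕ), |(a k ((j : ℤ) - (i : ℤ)) - aL ((j : ℤ) - (i : ℤ))) + (Ek k i j - E i j)| :=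
        tsum_congr fun j => by simp only [Toep]; ring_nf
      rw [heqr]
      have hsd : Summable fun t : ℤ => |a k t - aL t| := haks k
      have h1 := aux_tsum_abs_add_le (toep_row_summable hsd i) (hE2 i k)
      have h2 := toep_row_le hsd i
      have h3 := hNe k hke i
      linarith
    have hle : normInf (fun i j => (Toep (a k) i j + Ek k i j) - (Toep aL i j + E i j))
        ≤ 2 * (ε / 3) := by
      simp only [normInf]
      exact ciSup_le hrowle
    have hge : (0:ℝ) ≤ normInf
        (fun i j => (Toep (a k) i j + Ek k i j) - (Toep aL i j + E i j)) := by
      simp only [normInf]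
      exact Real.iSup_nonneg fun i => tsum_nonneg fun j => abs_nonneg _
    rw [Real.dist_eq, sub_zero, abs_of_nonneg hge]
    linarith
  exact ⟨aL, E, haLsum, hEMatB, hEdecay, hmain, haT, hEtend⟩
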